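/- Let α₁, α₂, α₃ ∈ (0,1] with α₁+α₂+α₃ > 2. If λ and μ are both conformal densities of constant curvature −1 on ℂ'' = ℂ∖{0,1} with singularities of order α₁ at 0, α₂ at 1 and α₃ at ∞, then λ = μ on ℂ''. (That is, the generalized hyperbolic density of order (α₁,α₂,α₃) is unique.) -/

import Mathlib

open Complex Real Set Filter

/-- The Euclidean Laplacian `Δ = ∂²/∂x² + ∂²/∂y²` of a function `u : ℂ → ℝ`, computed as the
sum of the second directional derivatives in the directions `1` and `I`. -/
noncomputable def laplacian (u : ℂ → ℝ) (z : ℂ) : ℝ :=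
  fderiv ℝ (fun w => fderiv ℝ u w 1) z 1 +
    fderiv ℝ (fun w => fderiv ℝ u w Complex.I) z Complex.I

/-- `lam` is a conformal density of constant curvature `-1` on the open set `Ω`:
it is positive, twice continuously differentiable and satisfies `Δ (log lam) = lam ^ 2`. -/
def IsConfDensityNegOne (lam : ℂ → ℝ) (Ω : Set ℂ) : Prop :=
  IsOpen Ω ∧ ContDiffOn ℝ 2 lam Ω ∧
    ∀ z ∈ Ω, 0 < lam z ∧ laplacian (fun w => Real.log (lam w)) z = lam z ^ 2

/-- `lam` has a singularity of order `α ≤ 1` at the point `p`: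
`log lam z + α log |z - p|` (for `α < 1`), resp.
`log lam z + log |z - p| + log (-log |z - p|)` (for `α = 1`), stays bounded near `p`. -/
def HasSingOrderAt (lam : ℂ → ℝ) (α : ℝ) (p : ℂ) : Prop :=
  (α < 1 ∧ ∃ C > (0:ℝ), ∃ ε > (0:ℝ), ∀ z : ℂ, z ≠ p → ‖z - p‖ < ε →
      |Real.log (lam z) + α * Real.log (‖z - p‖)| ≤ C) ∨
  (α = 1 ∧ ∃ C > (0:ℝ), ∃ ε > (0:ℝ), ∀ z : ℂ, z ≠ p → ‖z - p‖ < ε →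
      |Real.log (lam z) + Real.log (‖z - p‖) +
        Real.log (-Real.log (‖z - p‖))| ≤ C)

/-- `lam` has a singularity of order `α` at `∞`, i.e. `z ↦ lam (1/z) / |z|²` has a
singularity of order `α` at `0`. -/
def HasSingOrderAtInf (lam : ℂ → ℝ) (α : ℝ) : Prop :=
  HasSingOrderAt (fun z => lam (1 / z) / ‖z‖ ^ 2) α 0

/-- `lam` is a (the) generalized hyperbolic density of order `(a1, a2, a3)` on `ℂ ∖ {0,1}`. -/
def IsGenHypDensity (a1 a2 a3 : ℝ) (lam : ℂ → ℝ) : Prop :=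
  IsConfDensityNegOne lam ({0, 1} : Set ℂ)ᶜ ∧
    HasSingOrderAt lam a1 0 ∧ HasSingOrderAt lam a2 1 ∧ HasSingOrderAtInf lam a3

/-- The generalized curvature of an upper semicontinuous density `mu` at `z`. -/
noncomputable def genCurvature (mu : ℂ → ℝ) (z : ℂ) : ℝ :=
  -(Filter.liminf (fun r : ℝ =>
      (4 / r ^ 2) * ((1 / (2 * Real.pi)) *
          (∫ t in (0:ℝ)..(2 * Real.pi),
            Real.log (mu (z + r * Complex.exp (t * Complex.I)))) -
        Real.log (mu z))) (nhdsWithin 0 (Set.Ioi 0))) / mu z ^ 2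

/-- `mu` is an SK-metric density on the open set `G`: upper semicontinuous, nonnegative, with
generalized curvature at most `-1` wherever it is positive. -/
def IsSKDensity (mu : ℂ → ℝ) (G : Set ℂ) : Prop :=
  IsOpen G ∧ UpperSemicontinuousOn mu G ∧ (∀ z ∈ G, 0 ≤ mu z) ∧
    ∀ z ∈ G, 0 < mu z → genCurvature mu z ≤ -1

/-- The Gauss hypergeometric series `F(a,b,c;z) = Σ (a)ₙ(b)ₙ/((c)ₙ n!) zⁿ`. -/
noncomputable def hypF (a b c : ℝ) (z : ℂ) : ℂ :=
  ∑' n : ℕ, ((ascPochhammer ℂ n).eval (a : ℂ) * (ascPochhammer ℂ n).eval (b : ℂ) /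
      ((ascPochhammer ℂ n).eval (c : ℂ) * (n.factorial : ℂ))) * z ^ n

/-- The class `𝓜_{j,k,l}` of meromorphic functions on the open unit disk all of whose zeros
have order at least `j`, all zeros of `f - 1` have order at least `k`, and all poles have
order at least `l`. -/
def MeroClass (j k l : ℕ) (f : ℂ → ℂ) : Prop :=
  ∃ (hf : MeromorphicOn f (Metric.ball (0:ℂ) 1))
    (hf1 : MeromorphicOn (fun z => f z - 1) (Metric.ball (0:ℂ) 1)),
    (∀ z, ∀ hz : z ∈ Metric.ball (0:ℂ) 1,
        0 < meromorphicOrderAt f z → ((j : ℤ) : WithTop ℤ) ≤ meromorphicOrderAt f z) ∧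
    (∀ z, ∀ hz : z ∈ Metric.ball (0:ℂ) 1,
        0 < meromorphicOrderAt (fun w => f w - 1) z → ((k : ℤ) : WithTop ℤ) ≤ meromorphicOrderAt (fun w => f w - 1) z) ∧
    (∀ z, ∀ hz : z ∈ Metric.ball (0:ℂ) 1,
        meromorphicOrderAt f z < 0 → meromorphicOrderAt f z ≤ ((-(l : ℤ)) : WithTop ℤ))

/-- The inverse hyperbolic tangent. -/
noncomputable def arctanh (x : ℝ) : ℝ := (1 / 2) * Real.log ((1 + x) / (1 - x))

/-- `log⁺ x = max (log x) 0`. -/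
noncomputable def logPlus (x : ℝ) : ℝ := max (Real.log x) 0

-- ===== auxiliary development =====


lemma laplacian_congr {f g : ℂ → ℝ} {z : ℂ} (h : f =ᶠ[nhds z] g) :
    laplacian f z = laplacian g z := by
  have key : ∀ v : ℂ, (fun w => fderiv ℝ f w v) =ᶠ[nhds z] (fun w => fderiv ℝ g w v) := by
    intro v
    filter_upwards [h.eventually_nhds] with w hw
    rw [Filter.EventuallyEq.fderiv_eq hw]
  unfold laplacian
  rw [Filter.EventuallyEq.fderiv_eq (key 1), Filter.EventuallyEq.fderiv_eq (key Complex.I)]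

lemma laplacian_eq_of {f f1 fI : ℂ → ℝ} {z : ℂ} {L1 LI : ℂ →L[ℝ] ℝ}
    (h1 : ∀ᶠ w in nhds z, fderiv ℝ f w 1 = f1 w)
    (hI : ∀ᶠ w in nhds z, fderiv ℝ f w Complex.I = fI w)
    (H1 : HasFDerivAt f1 L1 z) (HI : HasFDerivAt fI LI z) :
    laplacian f z = L1 1 + LI Complex.I := by
  unfold laplacian
  rw [Filter.EventuallyEq.fderiv_eq h1, Filter.EventuallyEq.fderiv_eq hI, H1.fderiv, HI.fderiv]

lemma two_ne_top : (2 : WithTop ℕ∞) ≠ (⊤ : ℕ∞) := by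
  norm_num

lemma one_le_two'' : (1 : WithTop ℕ∞) ≤ 2 := by norm_num

lemma ContDiffAt.diff_fderiv_apply {f : ℂ → ℝ} {z : ℂ} (hf : ContDiffAt ℝ 2 f z) (v : ℂ) :
    DifferentiableAt ℝ (fun w => fderiv ℝ f w v) z := by
  have h1 : ContDiffAt ℝ 1 (fderiv ℝ f) z := hf.fderiv_right (by norm_num)
  exact (h1.differentiableAt one_ne_zero).clm_apply (differentiableAt_const v)

lemma laplacian_add {f g : ℂ → ℝ} {z : ℂ} (hf : ContDiffAt ℝ 2 f z) (hg : ContDiffAt ℝ 2 g z) :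
    laplacian (fun w => f w + g w) z = laplacian f z + laplacian g z := by
  have hev : ∀ v : ℂ, (fun w => fderiv ℝ (fun y => f y + g y) w v)
      =ᶠ[nhds z] (fun w => fderiv ℝ f w v + fderiv ℝ g w v) := by
    intro v
    filter_upwards [hf.eventually two_ne_top, hg.eventually two_ne_top] with w hfw hgw
    rw [fderiv_fun_add (hfw.differentiableAt two_ne_zero) (hgw.differentiableAt two_ne_zero)]
    rfl
  unfold laplacian
  rw [Filter.EventuallyEq.fderiv_eq (hev 1),
    Filter.EventuallyEq.fderiv_eq (hev Complex.I),
    fderiv_fun_add (hf.diff_fderiv_apply 1) (hg.diff_fderiv_apply 1),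
    fderiv_fun_add (hf.diff_fderiv_apply Complex.I) (hg.diff_fderiv_apply Complex.I)]
  simp
  ring

lemma laplacian_const_mul {g : ℂ → ℝ} {z : ℂ} (c : ℝ) (hg : ContDiffAt ℝ 2 g z) :
    laplacian (fun w => c * g w) z = c * laplacian g z := by
  have hev : ∀ v : ℂ, (fun w => fderiv ℝ (fun y => c * g y) w v)
      =ᶠ[nhds z] (fun w => c * fderiv ℝ g w v) := by
    intro v
    filter_upwards [hg.eventually two_ne_top] with w hgw
    rw [fderiv_const_mul (hgw.differentiableAt two_ne_zero) c]
    rfl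
  unfold laplacian
  rw [Filter.EventuallyEq.fderiv_eq (hev 1),
    Filter.EventuallyEq.fderiv_eq (hev Complex.I),
    fderiv_const_mul (hg.diff_fderiv_apply 1) c,
    fderiv_const_mul (hg.diff_fderiv_apply Complex.I) c]
  simp
  ring

lemma laplacian_sub {f g : ℂ → ℝ} {z : ℂ} (hf : ContDiffAt ℝ 2 f z) (hg : ContDiffAt ℝ 2 g z) :
    laplacian (fun w => f w - g w) z = laplacian f z - laplacian g z := by
  have hev : ∀ v : ℂ, (fun w => fderiv ℝ (fun y => f y - g y) w v)
      =ᶠ[nhds z] (fun w => fderiv ℝ f w v - fderiv ℝ g w v) := by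
    intro v
    filter_upwards [hf.eventually two_ne_top, hg.eventually two_ne_top] with w hfw hgw
    rw [fderiv_fun_sub (hfw.differentiableAt two_ne_zero) (hgw.differentiableAt two_ne_zero)]
    rfl
  unfold laplacian
  rw [Filter.EventuallyEq.fderiv_eq (hev 1),
    Filter.EventuallyEq.fderiv_eq (hev Complex.I),
    fderiv_fun_sub (hf.diff_fderiv_apply 1) (hg.diff_fderiv_apply 1),
    fderiv_fun_sub (hf.diff_fderiv_apply Complex.I) (hg.diff_fderiv_apply Complex.I)]
  simp
  ring


lemma secondDeriv_dir_nonpos {f : ℂ → ℝ} {z : ℂ}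
    (hf : ContDiffAt ℝ 2 f z) (hmax : IsLocalMax f z) (v : ℂ) :
    fderiv ℝ (fun w => fderiv ℝ f w v) z v ≤ 0 := by
  by_contra hq
  push_neg at hq
  set F : ℂ → ℝ := fun w => fderiv ℝ f w v with hF
  set q : ℝ := fderiv ℝ F z v with hqdef
  have hline : ∀ t : ℝ, HasDerivAt (fun s : ℝ => z + s • v) v t := by
    intro t
    simpa using ((hasDerivAt_id t).smul_const v).const_add z
  have hline0 : z + (0:ℝ) • v = z := by simp
  have hFdiff : DifferentiableAt ℝ F z := by
    have h1 : ContDiffAt ℝ 1 (fderiv ℝ f) z := hf.fderiv_right (by norm_num)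
    exact (h1.differentiableAt one_ne_zero).clm_apply (differentiableAt_const v)
  have hG : HasDerivAt (fun t : ℝ => F (z + t • v)) q 0 := by
    have hF' : HasFDerivAt F (fderiv ℝ F z) (z + (0:ℝ) • v) := by
      rw [hline0]; exact hFdiff.hasFDerivAt
    have := hF'.comp_hasDerivAt 0 (hline 0)
    simpa [hqdef, Function.comp_def] using this
  have hG0 : F z = 0 := by
    rw [hF]
    simp [hmax.fderiv_eq_zero]
  have hslope : ∀ᶠ t in nhdsWithin (0:ℝ) ({0}ᶜ), 0 < F (z + t • v) / t := by
    have h1 := hasDerivAt_iff_tendsto_slope.1 hG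
    have h2 := h1.eventually (eventually_gt_nhds hq)
    filter_upwards [h2] with t ht
    simpa [slope_def_field, hG0, sub_zero] using ht
  have hdiff : ∀ᶠ t in nhds (0:ℝ), DifferentiableAt ℝ f (z + t • v) ∧ f (z + t • v) ≤ f z := by
    have hcont : Filter.Tendsto (fun t : ℝ => z + t • v) (nhds 0) (nhds z) := by
      simpa [hline0] using (hline 0).continuousAt.tendsto
    have h1 : ∀ᶠ w in nhds z, DifferentiableAt ℝ f w ∧ f w ≤ f z := by
      filter_upwards [hf.eventually (by norm_num : (2 : WithTop ℕ∞) ≠ (⊤ : ℕ∞)), hmax] with w h h'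
      exact ⟨h.differentiableAt (by norm_num), h'⟩
    exact hcont.eventually h1
  rw [Metric.eventually_nhds_iff] at hdiff
  obtain ⟨ε, hε, hdiff⟩ := hdiff
  rw [eventually_nhdsWithin_iff, Metric.eventually_nhds_iff] at hslope
  obtain ⟨ε', hε', hslope⟩ := hslope
  set b : ℝ := min ε ε' / 2 with hb
  have hb0 : 0 < b := by positivity
  have hbε : b < ε := by
    have := min_le_left ε ε'
    have := min_le_right ε ε'
    rw [hb]; linarith
  have hbε' : b < ε' := by
    have := min_le_left ε ε'
    have := min_le_right ε ε'
    rw [hb]; linarith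
  have hg' : ∀ t : ℝ, |t| < ε → HasDerivAt (fun s : ℝ => f (z + s • v)) (F (z + t • v)) t := by
    intro t ht
    have hd : DifferentiableAt ℝ f (z + t • v) := by
      refine (hdiff (y := t) ?_).1
      simpa [Real.dist_eq] using ht
    have := hd.hasFDerivAt.comp_hasDerivAt t (hline t)
    simpa [hF, Function.comp_def] using this
  have hcont : ContinuousOn (fun s : ℝ => f (z + s • v)) (Icc 0 b) := by
    intro t ht
    have habs : |t| < ε := by
      rw [_root_.abs_of_nonneg ht.1]
      linarith [ht.2]
    exact (hg' t habs).continuousAt.continuousWithinAt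
  obtain ⟨c, hc, hceq⟩ := exists_hasDerivAt_eq_slope (fun s : ℝ => f (z + s • v))
    (fun s : ℝ => F (z + s • v)) hb0 hcont
    (fun x hx => hg' x (by rw [_root_.abs_of_nonneg (le_of_lt hx.1)]; linarith [hx.2]))
  have hnum : f (z + b • v) - f (z + (0:ℝ) • v) ≤ 0 := by
    have h1 : f (z + b • v) ≤ f z := by
      refine (hdiff (y := b) ?_).2
      rw [Real.dist_eq, sub_zero, _root_.abs_of_nonneg (le_of_lt hb0)]
      exact hbε
    rw [hline0]
    linarith
  have hcpos : 0 < F (z + c • v) / c := by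
    refine hslope (y := c) ?_ ?_
    · rw [Real.dist_eq, sub_zero, _root_.abs_of_nonneg (le_of_lt hc.1)]
      linarith [hc.2]
    · simp [ne_of_gt hc.1]
  have hFcpos : 0 < F (z + c • v) := by
    by_contra hle
    push_neg at hle
    have : F (z + c • v) / c ≤ 0 := div_nonpos_of_nonpos_of_nonneg hle (le_of_lt hc.1)
    linarith
  rw [hceq] at hFcpos
  have : (f (z + b • v) - f (z + (0:ℝ) • v)) / (b - 0) ≤ 0 :=
    div_nonpos_of_nonpos_of_nonneg hnum (by linarith)
  linarith

lemma laplacian_nonpos_of_isLocalMax {f : ℂ → ℝ} {z : ℂ}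
    (hf : ContDiffAt ℝ 2 f z) (hmax : IsLocalMax f z) :
    laplacian f z ≤ 0 := by
  have h1 := secondDeriv_dir_nonpos hf hmax 1
  have hI := secondDeriv_dir_nonpos hf hmax Complex.I
  unfold laplacian
  linarith


section quad
variable (p : ℂ) (c : ℝ)

private lemma hx : ∀ w : ℂ, HasFDerivAt (fun w : ℂ => (w - p).re) Complex.reCLM w := by
  intro w
  have := (Complex.reCLM.hasFDerivAt (x := w)).sub_const p.re
  exact this

private lemma hy : ∀ w : ℂ, HasFDerivAt (fun w : ℂ => (w - p).im) Complex.imCLM w := by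
  intro w
  have := (Complex.imCLM.hasFDerivAt (x := w)).sub_const p.im
  exact this

private lemma hQ : ∀ w : ℂ, HasFDerivAt (fun w : ℂ => Complex.normSq (w - p) + c)
    ((((w - p).re • Complex.reCLM + (w - p).re • Complex.reCLM) +
      ((w - p).im • Complex.imCLM + (w - p).im • Complex.imCLM)) : ℂ →L[ℝ] ℝ) w := by
  intro w
  have h := (((hx p w).mul (hx p w)).add ((hy p w).mul (hy p w))).add_const c
  have e : (fun w : ℂ => Complex.normSq (w - p) + c)
      = (fun w : ℂ => (w - p).re * (w - p).re + (w - p).im * (w - p).im + c) := by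
    funext w
    simp [Complex.normSq_apply]
  rw [e]
  exact h

lemma contDiffAt_log_quad {z : ℂ} (h : Complex.normSq (z - p) + c ≠ 0) :
    ContDiffAt ℝ 2 (fun w : ℂ => Real.log (Complex.normSq (w - p) + c)) z := by
  refine ContDiffAt.log ?_ h
  have h1 : ContDiff ℝ 2 (fun w : ℂ => Complex.normSq (w - p) + c) := by
    have hre : ContDiff ℝ 2 (fun w : ℂ => (w - p).re) := by
      have := Complex.reCLM.contDiff (n := (2 : WithTop ℕ∞))
      exact this.comp (contDiff_id.sub contDiff_const)
    have him : ContDiff ℝ 2 (fun w : ℂ => (w - p).im) := by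
      have := Complex.imCLM.contDiff (n := (2 : WithTop ℕ∞))
      exact this.comp (contDiff_id.sub contDiff_const)
    have : ContDiff ℝ 2 (fun w : ℂ => (w - p).re * (w - p).re + (w - p).im * (w - p).im + c) :=
      ((hre.mul hre).add (him.mul him)).add (contDiff_const)
    have e : (fun w : ℂ => Complex.normSq (w - p) + c)
      = (fun w : ℂ => (w - p).re * (w - p).re + (w - p).im * (w - p).im + c) := by
      funext w
      simp [Complex.normSq_apply]
    rw [e]
    exact this
  exact h1.contDiffAt

set_option maxHeartbeats 1000000 in
lemma laplacian_log_quad {z : ℂ} (hz : 0 < Complex.normSq (z - p) + c) :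
    laplacian (fun w : ℂ => Real.log (Complex.normSq (w - p) + c)) z
      = 4 * c / (Complex.normSq (z - p) + c) ^ 2 := by
  set Q : ℂ → ℝ := fun w : ℂ => Complex.normSq (w - p) + c with hQdef
  have hQpos : ∀ᶠ w in nhds z, 0 < Q w := by
    have hc : ContinuousAt Q z := (hQ p c z).continuousAt
    exact hc.eventually (eventually_gt_nhds hz)
  set f1 : ℂ → ℝ := fun w => (Q w)⁻¹ * ((w - p).re + (w - p).re) with hf1
  set fI : ℂ → ℝ := fun w => (Q w)⁻¹ * ((w - p).im + (w - p).im) with hfI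
  have hlogf : ∀ w : ℂ, 0 < Q w → fderiv ℝ (fun y => Real.log (Q y)) w =
      (Q w)⁻¹ • (((w - p).re • Complex.reCLM + (w - p).re • Complex.reCLM) +
      ((w - p).im • Complex.imCLM + (w - p).im • Complex.imCLM)) := by
    intro w hw
    exact ((hQ p c w).log hw.ne').fderiv
  have h1 : ∀ᶠ w in nhds z, fderiv ℝ (fun y => Real.log (Q y)) w 1 = f1 w := by
    filter_upwards [hQpos] with w hw
    rw [hlogf w hw]
    simp [hf1, smul_eq_mul]
    ring
  have hI : ∀ᶠ w in nhds z, fderiv ℝ (fun y => Real.log (Q y)) w Complex.I = fI w := by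
    filter_upwards [hQpos] with w hw
    rw [hlogf w hw]
    simp [hfI, smul_eq_mul]
    ring
  have hinv : HasFDerivAt (fun w => (Q w)⁻¹) ((-(Q z ^ 2)⁻¹) •
      (((z - p).re • Complex.reCLM + (z - p).re • Complex.reCLM) +
      ((z - p).im • Complex.imCLM + (z - p).im • Complex.imCLM))) z :=
    (hasDerivAt_inv hz.ne').comp_hasFDerivAt z (hQ p c z)
  have H1 : HasFDerivAt f1 _ z := hinv.mul ((hx p z).add (hx p z))
  have HI : HasFDerivAt fI _ z := hinv.mul ((hy p z).add (hy p z))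
  rw [laplacian_eq_of h1 hI H1 HI]
  have hne : Q z ≠ 0 := hz.ne'
  have hQval : Q z = (z - p).re * (z - p).re + (z - p).im * (z - p).im + c := by
    simp [hQdef, Complex.normSq_apply]
  simp only [ContinuousLinearMap.add_apply, ContinuousLinearMap.smul_apply,
    Complex.reCLM_apply, Complex.imCLM_apply, Complex.one_re, Complex.one_im,
    Complex.I_re, Complex.I_im, smul_eq_mul, mul_one, mul_zero, add_zero, zero_add,
    ContinuousLinearMap.coe_smul', Pi.smul_apply, neg_mul, neg_smul]
  rw [show Complex.normSq (z - p) + c = Q z from rfl]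
  set X : ℝ := (z - p).re with hX
  set Y : ℝ := (z - p).im with hY
  generalize hq : Q z = q at hQval hne ⊢
  field_simp
  rw [hQval]
  ring
end quad



lemma sing_diff_bound {lam mu : ℂ → ℝ} {α : ℝ} {p : ℂ}
    (hl : HasSingOrderAt lam α p) (hm : HasSingOrderAt mu α p) :
    ∃ C > (0:ℝ), ∃ ε > (0:ℝ), ∀ z : ℂ, z ≠ p → ‖z - p‖ < ε →
      |Real.log (lam z) - Real.log (mu z)| ≤ C := by
  have key : ∀ (φ : ℂ → ℝ) (Cl Cm εl εm : ℝ), 0 < Cl → 0 < Cm → 0 < εl → 0 < εm →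
      (∀ z : ℂ, z ≠ p → ‖z - p‖ < εl → |Real.log (lam z) + φ z| ≤ Cl) →
      (∀ z : ℂ, z ≠ p → ‖z - p‖ < εm → |Real.log (mu z) + φ z| ≤ Cm) →
      ∃ C > (0:ℝ), ∃ ε > (0:ℝ), ∀ z : ℂ, z ≠ p → ‖z - p‖ < ε →
        |Real.log (lam z) - Real.log (mu z)| ≤ C := by
    intro φ Cl Cm εl εm hCl hCm hεl hεm hbl hbm
    refine ⟨Cl + Cm, by linarith, min εl εm, lt_min hεl hεm, fun z hz hze => ?_⟩
    have h1 := hbl z hz (lt_of_lt_of_le hze (min_le_left _ _))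
    have h2 := hbm z hz (lt_of_lt_of_le hze (min_le_right _ _))
    have e : Real.log (lam z) - Real.log (mu z)
        = (Real.log (lam z) + φ z) - (Real.log (mu z) + φ z) := by ring
    rw [e]
    calc |(Real.log (lam z) + φ z) - (Real.log (mu z) + φ z)|
        ≤ |Real.log (lam z) + φ z| + |Real.log (mu z) + φ z| := abs_sub _ _
      _ ≤ Cl + Cm := add_le_add h1 h2
  rcases hl with ⟨hα, Cl, hCl, εl, hεl, hbl⟩ | ⟨hα, Cl, hCl, εl, hεl, hbl⟩ <;>
    rcases hm with ⟨hα', Cm, hCm, εm, hεm, hbm⟩ | ⟨hα', Cm, hCm, εm, hεm, hbm⟩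
  · exact key (fun z => α * Real.log (‖z - p‖)) Cl Cm εl εm hCl hCm hεl hεm hbl hbm
  · exact absurd hα' (by linarith)
  · exact absurd hα (by linarith)
  · refine key (fun z => Real.log (‖z - p‖) +
      Real.log (-Real.log (‖z - p‖))) Cl Cm εl εm hCl hCm hεl hεm ?_ ?_
    · intro z hz hze
      have := hbl z hz hze
      calc |Real.log (lam z) + (Real.log (‖z - p‖) +
          Real.log (-Real.log (‖z - p‖)))|
          = |Real.log (lam z) + Real.log (‖z - p‖) +
            Real.log (-Real.log (‖z - p‖))| := by ring_nf
        _ ≤ Cl := this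
    · intro z hz hze
      have := hbm z hz hze
      calc |Real.log (mu z) + (Real.log (‖z - p‖) +
          Real.log (-Real.log (‖z - p‖)))|
          = |Real.log (mu z) + Real.log (‖z - p‖) +
            Real.log (-Real.log (‖z - p‖))| := by ring_nf
        _ ≤ Cm := this

lemma sing_log_lower {mu : ℂ → ℝ} {α : ℝ} {p : ℂ} (hα : 0 < α)
    (hm : HasSingOrderAt mu α p) :
    ∃ C > (0:ℝ), ∃ ε > (0:ℝ), ε ≤ 1/2 ∧ ∀ z : ℂ, z ≠ p → ‖z - p‖ < ε →
      -C ≤ Real.log (mu z) := by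
  rcases hm with ⟨hα1, C, hC, ε, hε, hb⟩ | ⟨hα1, C, hC, ε, hε, hb⟩
  · refine ⟨C, hC, min ε (1/2), lt_min hε (by norm_num), min_le_right _ _, fun z hz hze => ?_⟩
    have h1 := hb z hz (lt_of_lt_of_le hze (min_le_left _ _))
    have habs : 0 < ‖z - p‖ := by
      simpa [norm_pos_iff] using sub_ne_zero.2 hz
    have hlt1 : ‖z - p‖ < 1 :=
      lt_of_lt_of_le (lt_of_lt_of_le hze (min_le_right _ _)) (by norm_num)
    have hlogneg : Real.log (‖z - p‖) < 0 := Real.log_neg habs hlt1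
    have := abs_le.1 h1
    nlinarith [this.1, hlogneg, hα.le]
  · refine ⟨C, hC, min ε (1/2), lt_min hε (by norm_num), min_le_right _ _, fun z hz hze => ?_⟩
    have h1 := hb z hz (lt_of_lt_of_le hze (min_le_left _ _))
    have habs : 0 < ‖z - p‖ := by
      simpa [norm_pos_iff] using sub_ne_zero.2 hz
    have hlt : ‖z - p‖ ≤ 1/2 :=
      le_of_lt (lt_of_lt_of_le hze (min_le_right _ _))
    set t := ‖z - p‖ with ht
    have hlogneg : Real.log t < 0 := Real.log_neg habs (by linarith)
    have hkey : Real.log t + Real.log (-Real.log t) ≤ 0 := by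
      have h2 : Real.log (-Real.log t) ≤ -Real.log t := Real.log_le_self (by linarith)
      linarith
    have := abs_le.1 h1
    linarith [this.1]


noncomputable def barr : ℂ → ℝ := fun z =>
  (Real.log (Complex.normSq (z - 0) + 0) + Real.log (Complex.normSq (z - 1) + 0)) +
    (-3) * Real.log (Complex.normSq (z - 0) + 1)

lemma ns0 {z : ℂ} (h : z ≠ 0) : 0 < Complex.normSq (z - 0) + 0 := by
  simpa using Complex.normSq_pos.2 h

lemma ns1 {z : ℂ} (h : z ≠ 1) : 0 < Complex.normSq (z - 1) + 0 := by
  simpa using Complex.normSq_pos.2 (sub_ne_zero.2 h)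

lemma nsP (z : ℂ) : 0 < Complex.normSq (z - 0) + 1 := by
  have := Complex.normSq_nonneg (z - 0)
  linarith

lemma barr_contDiffAt {z : ℂ} (h0 : z ≠ 0) (h1 : z ≠ 1) : ContDiffAt ℝ 2 barr z := by
  have hA0 := contDiffAt_log_quad 0 0 (ns0 h0).ne'
  have hA1 := contDiffAt_log_quad 1 0 (ns1 h1).ne'
  have hB := contDiffAt_log_quad 0 1 (nsP z).ne'
  exact ((hA0.add hA1).add (contDiffAt_const.mul hB) : ContDiffAt ℝ 2 _ z)

lemma barr_lap {z : ℂ} (h0 : z ≠ 0) (h1 : z ≠ 1) :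
    laplacian barr z = -12 / (Complex.normSq z + 1) ^ 2 := by
  have hA0 := contDiffAt_log_quad 0 0 (ns0 h0).ne'
  have hA1 := contDiffAt_log_quad 1 0 (ns1 h1).ne'
  have hB := contDiffAt_log_quad 0 1 (nsP z).ne'
  have e1 : laplacian barr z =
      laplacian (fun w : ℂ => Real.log (Complex.normSq (w - 0) + 0) +
        Real.log (Complex.normSq (w - 1) + 0)) z +
      laplacian (fun w : ℂ => (-3) * Real.log (Complex.normSq (w - 0) + 1)) z :=
    laplacian_add (hA0.add hA1) (contDiffAt_const.mul hB)
  have e2 : laplacian (fun w : ℂ => Real.log (Complex.normSq (w - 0) + 0) +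
      Real.log (Complex.normSq (w - 1) + 0)) z =
      laplacian (fun w : ℂ => Real.log (Complex.normSq (w - 0) + 0)) z +
      laplacian (fun w : ℂ => Real.log (Complex.normSq (w - 1) + 0)) z :=
    laplacian_add hA0 hA1
  have e3 : laplacian (fun w : ℂ => (-3) * Real.log (Complex.normSq (w - 0) + 1)) z =
      (-3) * laplacian (fun w : ℂ => Real.log (Complex.normSq (w - 0) + 1)) z :=
    laplacian_const_mul (-3) hB
  rw [e1, e2, e3, laplacian_log_quad 0 0 (ns0 h0), laplacian_log_quad 1 0 (ns1 h1),
    laplacian_log_quad 0 1 (nsP z)]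
  have hP : Complex.normSq (z - 0) + 1 = Complex.normSq z + 1 := by simp
  rw [hP]
  have : (0:ℝ) < Complex.normSq z + 1 := by
    have := Complex.normSq_nonneg z; linarith
  field_simp
  norm_num

lemma barr_eq (z : ℂ) : barr z = Real.log (Complex.normSq z) + Real.log (Complex.normSq (z - 1))
    - 3 * Real.log (Complex.normSq z + 1) := by
  simp [barr]
  ring

lemma barr_le (z : ℂ) : barr z ≤ Real.log 2 - Real.log (Complex.normSq z + 1) := by
  rw [barr_eq]
  have hN := Complex.normSq_nonneg z
  have hP1 : (1:ℝ) ≤ Complex.normSq z + 1 := by linarith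
  have hlogP : 0 ≤ Real.log (Complex.normSq z + 1) := Real.log_nonneg hP1
  have h0 : Real.log (Complex.normSq z) ≤ Real.log (Complex.normSq z + 1) := by
    rcases eq_or_lt_of_le hN with h | h
    · rw [← h, Real.log_zero]; norm_num
    · exact Real.log_le_log h (by linarith)
  have h1 : Real.log (Complex.normSq (z - 1)) ≤ Real.log 2 + Real.log (Complex.normSq z + 1) := by
    have hb : Complex.normSq (z - 1) ≤ 2 * (Complex.normSq z + 1) := by
      rw [Complex.normSq_apply, Complex.normSq_apply]
      simp [Complex.sub_re, Complex.sub_im]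
      nlinarith [sq_nonneg (z.re + 1), sq_nonneg z.im]
    rcases eq_or_lt_of_le (Complex.normSq_nonneg (z - 1)) with h | h
    · rw [← h, Real.log_zero]
      have : 0 ≤ Real.log 2 := Real.log_nonneg one_le_two
      linarith
    · calc Real.log (Complex.normSq (z - 1)) ≤ Real.log (2 * (Complex.normSq z + 1)) :=
          Real.log_le_log h hb
        _ = Real.log 2 + Real.log (Complex.normSq z + 1) :=
          Real.log_mul two_ne_zero (by linarith)
  linarith

lemma barr_le' (z : ℂ) : barr z ≤ Real.log 2 := by
  have h := barr_le z
  have hN := Complex.normSq_nonneg z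
  have : 0 ≤ Real.log (Complex.normSq z + 1) := Real.log_nonneg (by linarith)
  linarith

lemma barr_near0 {z : ℂ} (h : ‖z‖ ≤ 1/2) :
    barr z ≤ Real.log (Complex.normSq z) + 3 := by
  rw [barr_eq]
  have hz1 : z ≠ 1 := by
    intro rfl_h
    rw [rfl_h] at h
    norm_num at h
  have habs1 : ‖z - 1‖ ≤ 3/2 := by
    calc ‖z - 1‖ ≤ ‖z‖ + ‖(1:ℂ)‖ := by
          simpa [sub_eq_add_neg] using norm_add_le z (-1)
      _ ≤ 3/2 := by rw [norm_one]; linarith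
  have hN1pos : 0 < Complex.normSq (z - 1) := Complex.normSq_pos.2 (sub_ne_zero.2 hz1)
  have hN1 : Complex.normSq (z - 1) ≤ 4 := by
    rw [Complex.normSq_eq_norm_sq]
    nlinarith [norm_nonneg (z - 1)]
  have h1 : Real.log (Complex.normSq (z - 1)) ≤ 3 := by
    calc Real.log (Complex.normSq (z - 1)) ≤ Real.log 4 := Real.log_le_log hN1pos hN1
      _ ≤ 4 - 1 := Real.log_le_sub_one_of_pos (by norm_num)
      _ = 3 := by norm_num
  have hN := Complex.normSq_nonneg z
  have hlogP : 0 ≤ Real.log (Complex.normSq z + 1) := Real.log_nonneg (by linarith)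
  linarith

lemma barr_near1 {z : ℂ} (h : ‖z - 1‖ ≤ 1/2) :
    barr z ≤ Real.log (Complex.normSq (z - 1)) + 3 := by
  rw [barr_eq]
  have hz0 : z ≠ 0 := by
    intro rfl_h
    rw [rfl_h] at h
    norm_num at h
  have habs0 : ‖z‖ ≤ 3/2 := by
    calc ‖z‖ = ‖(z - 1) + 1‖ := by ring_nf
      _ ≤ ‖z - 1‖ + ‖1‖ := norm_add_le _ _
      _ ≤ 3/2 := by rw [norm_one]; linarith
  have hN0pos : 0 < Complex.normSq z := Complex.normSq_pos.2 hz0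
  have hN0 : Complex.normSq z ≤ 4 := by
    rw [Complex.normSq_eq_norm_sq]
    nlinarith [norm_nonneg z]
  have h1 : Real.log (Complex.normSq z) ≤ 3 := by
    calc Real.log (Complex.normSq z) ≤ Real.log 4 := Real.log_le_log hN0pos hN0
      _ ≤ 4 - 1 := Real.log_le_sub_one_of_pos (by norm_num)
      _ = 3 := by norm_num
  have hN := Complex.normSq_nonneg (z - 1)
  have hlogP : 0 ≤ Real.log (Complex.normSq z + 1) :=
    Real.log_nonneg (by linarith [Complex.normSq_nonneg z])
  linarith

set_option maxHeartbeats 1000000 in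
lemma genHyp_le (a1 a2 a3 : ℝ) (ha1 : 0 < a1) (ha2 : 0 < a2) (ha3 : 0 < a3)
    (lam mu : ℂ → ℝ)
    (hlam : IsGenHypDensity a1 a2 a3 lam) (hmu : IsGenHypDensity a1 a2 a3 mu) :
    ∀ z ∈ (({0, 1} : Set ℂ)ᶜ), lam z ≤ mu z := by
  obtain ⟨⟨hopen, hlC, hlP⟩, hl0, hl1, hlinf⟩ := hlam
  obtain ⟨⟨-, hmC, hmP⟩, hm0, hm1, hminf⟩ := hmu
  have hmem : ∀ z : ℂ, z ∈ (({0,1} : Set ℂ)ᶜ) ↔ z ≠ 0 ∧ z ≠ 1 := fun z => by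
    simp [Set.mem_compl_iff, Set.mem_insert_iff, Set.mem_singleton_iff, not_or]
  -- log densities are C²
  have hlamCD : ∀ z ∈ (({0,1} : Set ℂ)ᶜ), ContDiffAt ℝ 2 (fun w => Real.log (lam w)) z :=
    fun z hz => (hlC.contDiffAt (hopen.mem_nhds hz)).log (hlP z hz).1.ne'
  have hmuCD : ∀ z ∈ (({0,1} : Set ℂ)ᶜ), ContDiffAt ℝ 2 (fun w => Real.log (mu w)) z :=
    fun z hz => (hmC.contDiffAt (hopen.mem_nhds hz)).log (hmP z hz).1.ne'
  have huCD : ∀ z ∈ (({0,1} : Set ℂ)ᶜ),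
      ContDiffAt ℝ 2 (fun w => Real.log (lam w) - Real.log (mu w)) z :=
    fun z hz => (hlamCD z hz).sub (hmuCD z hz)
  -- singularity difference bounds
  obtain ⟨C0, hC0, ε0, hε0, hb0⟩ := sing_diff_bound hl0 hm0
  obtain ⟨C1, hC1, ε1, hε1, hb1⟩ := sing_diff_bound hl1 hm1
  obtain ⟨C3, hC3, ε3', hε3', hb3⟩ := sing_diff_bound hlinf hminf
  set ε3 : ℝ := min ε3' (1/2) with hε3def
  have hε3 : 0 < ε3 := lt_min hε3' (by norm_num)
  have hε3half : ε3 ≤ 1/2 := min_le_right _ _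
  have h2ε3 : 2 ≤ 1/ε3 := by
    have h := one_div_le_one_div_of_le hε3 hε3half
    norm_num at h
    rwa [one_div]
  have hfar : ∀ z : ℂ, 1/ε3 < ‖z‖ → z ∈ (({0,1} : Set ℂ)ᶜ) := by
    intro z hzf
    rw [hmem]
    constructor
    · intro h; rw [h] at hzf; simp at hzf; linarith
    · intro h; rw [h] at hzf; rw [norm_one] at hzf; linarith
  -- bound at infinity
  have hbinf : ∀ z : ℂ, 1/ε3 < ‖z‖ →
      |Real.log (lam z) - Real.log (mu z)| ≤ C3 := by
    intro z hzf
    have hzΩ := hfar z hzf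
    have habs : 0 < ‖z‖ := by linarith
    have hzne : z ≠ 0 := by
      intro h; rw [h] at habs; simp at habs
    have hv0 : z⁻¹ ≠ 0 := inv_ne_zero hzne
    have habsv : ‖z⁻¹ - 0‖ < ε3' := by
      rw [sub_zero, norm_inv]
      have h1 : (‖z‖)⁻¹ < ε3 := by
        rw [inv_lt_comm₀ habs hε3] at *
        · rwa [← one_div]
      exact lt_of_lt_of_le h1 (min_le_left _ _)
    have key := hb3 z⁻¹ hv0 habsv
    rw [one_div, inv_inv] at key
    have habsvp : ‖z⁻¹‖ ^ 2 ≠ 0 := by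
      apply pow_ne_zero
      simpa using hzne
    have el : Real.log (lam z / ‖z⁻¹‖ ^ 2)
        = Real.log (lam z) - Real.log (‖z⁻¹‖ ^ 2) :=
      Real.log_div (hlP z hzΩ).1.ne' habsvp
    have em : Real.log (mu z / ‖z⁻¹‖ ^ 2)
        = Real.log (mu z) - Real.log (‖z⁻¹‖ ^ 2) :=
      Real.log_div (hmP z hzΩ).1.ne' habsvp
    rw [el, em] at key
    have : Real.log (lam z) - Real.log (‖z⁻¹‖ ^ 2)
        - (Real.log (mu z) - Real.log (‖z⁻¹‖ ^ 2))
        = Real.log (lam z) - Real.log (mu z) := by ring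
    rwa [this] at key
  -- compact middle region bound: global upper bound M for u
  have hK : IsCompact (Metric.closedBall (0:ℂ) (1/ε3) ∩
      ({z : ℂ | ε0 ≤ ‖z‖} ∩ {z : ℂ | ε1 ≤ ‖z - 1‖})) :=
    (isCompact_closedBall _ _).inter_right
      ((isClosed_le continuous_const continuous_norm).inter
        (isClosed_le continuous_const (continuous_norm.comp
          (continuous_id.sub continuous_const))))
  have hKΩ : (Metric.closedBall (0:ℂ) (1/ε3) ∩
      ({z : ℂ | ε0 ≤ ‖z‖} ∩ {z : ℂ | ε1 ≤ ‖z - 1‖}))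
      ⊆ (({0,1} : Set ℂ)ᶜ) := by
    intro z hz
    rw [hmem]
    obtain ⟨-, hz0, hz1⟩ := hz
    constructor
    · intro h
      rw [Set.mem_setOf_eq, h] at hz0
      simp at hz0
      linarith
    · intro h
      rw [Set.mem_setOf_eq, h] at hz1
      simp at hz1
      linarith
  obtain ⟨CK, hCK⟩ := hK.exists_bound_of_continuousOn
    (fun z hz => ((huCD z (hKΩ hz)).continuousAt).continuousWithinAt)
  set M : ℝ := max (max C0 C1) (max C3 CK) with hMdef
  have hM : ∀ z ∈ (({0,1} : Set ℂ)ᶜ), Real.log (lam z) - Real.log (mu z) ≤ M := by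
    intro z hz
    obtain ⟨hz0, hz1⟩ := (hmem z).1 hz
    by_cases h0 : ‖z‖ < ε0
    · have := hb0 z hz0 (by rwa [sub_zero])
      have := (abs_le.1 this).2
      have hle : C0 ≤ M := le_trans (le_max_left _ _) (le_max_left _ _)
      linarith
    by_cases h1 : ‖z - 1‖ < ε1
    · have := hb1 z hz1 h1
      have := (abs_le.1 this).2
      have hle : C1 ≤ M := le_trans (le_max_right _ _) (le_max_left _ _)
      linarith
    by_cases h3 : 1/ε3 < ‖z‖
    · have := hbinf z h3
      have := (abs_le.1 this).2
      have hle : C3 ≤ M := le_trans (le_max_left _ _) (le_max_right _ _)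
      linarith
    · have hzK : z ∈ (Metric.closedBall (0:ℂ) (1/ε3) ∩
          ({z : ℂ | ε0 ≤ ‖z‖} ∩ {z : ℂ | ε1 ≤ ‖z - 1‖})) := by
        refine ⟨?_, not_lt.1 h0, not_lt.1 h1⟩
        rw [Metric.mem_closedBall, Complex.dist_eq, sub_zero]
        exact not_lt.1 h3
      have := hCK z hzK
      rw [Real.norm_eq_abs] at this
      have := (abs_le.1 this).2
      have hle : CK ≤ M := le_trans (le_max_right _ _) (le_max_right _ _)
      linarith
  -- lower bound for mu
  obtain ⟨D0, hD0, η0, hη0, hη0h, hc0⟩ := sing_log_lower ha1 hm0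
  obtain ⟨D1, hD1, η1, hη1, hη1h, hc1⟩ := sing_log_lower ha2 hm1
  obtain ⟨D3, hD3, η3, hη3, hη3h, hc3⟩ := sing_log_lower ha3 hminf
  have h2η3 : 2 ≤ 1/η3 := by
    have h := one_div_le_one_div_of_le hη3 hη3h
    norm_num at h
    rwa [one_div]
  have hfar' : ∀ z : ℂ, 1/η3 < ‖z‖ → z ∈ (({0,1} : Set ℂ)ᶜ) := by
    intro z hzf
    rw [hmem]
    constructor
    · intro h; rw [h] at hzf; simp at hzf; linarith
    · intro h; rw [h] at hzf; rw [norm_one] at hzf; linarith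
  have hK2 : IsCompact (Metric.closedBall (0:ℂ) (1/η3) ∩
      ({z : ℂ | η0 ≤ ‖z‖} ∩ {z : ℂ | η1 ≤ ‖z - 1‖})) :=
    (isCompact_closedBall _ _).inter_right
      ((isClosed_le continuous_const continuous_norm).inter
        (isClosed_le continuous_const (continuous_norm.comp
          (continuous_id.sub continuous_const))))
  have hK2Ω : (Metric.closedBall (0:ℂ) (1/η3) ∩
      ({z : ℂ | η0 ≤ ‖z‖} ∩ {z : ℂ | η1 ≤ ‖z - 1‖}))
      ⊆ (({0,1} : Set ℂ)ᶜ) := by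
    intro z hz
    rw [hmem]
    obtain ⟨-, hz0, hz1⟩ := hz
    constructor
    · intro h
      rw [Set.mem_setOf_eq, h] at hz0
      simp at hz0
      linarith
    · intro h
      rw [Set.mem_setOf_eq, h] at hz1
      simp at hz1
      linarith
  have hmuK2 : ∃ cK > (0:ℝ), ∀ z ∈ (Metric.closedBall (0:ℂ) (1/η3) ∩
      ({z : ℂ | η0 ≤ ‖z‖} ∩ {z : ℂ | η1 ≤ ‖z - 1‖})),
      cK ≤ mu z * (Complex.normSq z + 1) := by
    rcases Set.eq_empty_or_nonempty (Metric.closedBall (0:ℂ) (1/η3) ∩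
      ({z : ℂ | η0 ≤ ‖z‖} ∩ {z : ℂ | η1 ≤ ‖z - 1‖})) with he | hne
    · exact ⟨1, one_pos, by rw [he]; simp⟩
    · have hcont : ContinuousOn (fun z : ℂ => mu z * (Complex.normSq z + 1))
          (Metric.closedBall (0:ℂ) (1/η3) ∩
          ({z : ℂ | η0 ≤ ‖z‖} ∩ {z : ℂ | η1 ≤ ‖z - 1‖})) := by
        intro z hz
        have h1 : ContinuousAt mu z := (hmC.contDiffAt (hopen.mem_nhds (hK2Ω hz))).continuousAt
        exact (h1.mul ((Complex.continuous_normSq.continuousAt).add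
          continuousAt_const)).continuousWithinAt
      obtain ⟨x0, hx0K, hx0min⟩ := hK2.exists_isMinOn hne hcont
      refine ⟨mu x0 * (Complex.normSq x0 + 1), ?_, fun z hz => hx0min hz⟩
      have hpos := (hmP x0 (hK2Ω hx0K)).1
      have hnn := Complex.normSq_nonneg x0
      exact mul_pos hpos (by linarith only [hnn])
  obtain ⟨cK, hcKpos, hcK⟩ := hmuK2
  set c0 : ℝ := min (min (Real.exp (-D0)) (Real.exp (-D1))) (min (Real.exp (-D3)) cK)
    with hc0def
  have hc0pos : 0 < c0 :=
    lt_min (lt_min (Real.exp_pos _) (Real.exp_pos _)) (lt_min (Real.exp_pos _) hcKpos)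
  have hmulb : ∀ z ∈ (({0,1} : Set ℂ)ᶜ), c0 ≤ mu z * (Complex.normSq z + 1) := by
    intro z hz
    obtain ⟨hz0, hz1⟩ := (hmem z).1 hz
    have hmupos := (hmP z hz).1
    have hNpos : (0:ℝ) ≤ Complex.normSq z := Complex.normSq_nonneg z
    by_cases h0 : ‖z‖ < η0
    · have hlog := hc0 z hz0 (by rwa [sub_zero])
      have hmuge : Real.exp (-D0) ≤ mu z := by
        calc Real.exp (-D0) ≤ Real.exp (Real.log (mu z)) := Real.exp_le_exp.2 hlog
          _ = mu z := Real.exp_log hmupos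
      have hle : c0 ≤ Real.exp (-D0) := le_trans (min_le_left _ _) (min_le_left _ _)
      have hsplit : mu z ≤ mu z * (Complex.normSq z + 1) := by
        have he : mu z * (Complex.normSq z + 1) = mu z * Complex.normSq z + mu z := by ring
        have hnn : 0 ≤ mu z * Complex.normSq z := mul_nonneg hmupos.le hNpos
        linarith only [he, hnn]
      linarith only [hsplit, hmuge, hle]
    by_cases h1 : ‖z - 1‖ < η1
    · have hlog := hc1 z hz1 h1
      have hmuge : Real.exp (-D1) ≤ mu z := by
        calc Real.exp (-D1) ≤ Real.exp (Real.log (mu z)) := Real.exp_le_exp.2 hlog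
          _ = mu z := Real.exp_log hmupos
      have hle : c0 ≤ Real.exp (-D1) := le_trans (min_le_left _ _) (min_le_right _ _)
      have hsplit : mu z ≤ mu z * (Complex.normSq z + 1) := by
        have he : mu z * (Complex.normSq z + 1) = mu z * Complex.normSq z + mu z := by ring
        have hnn : 0 ≤ mu z * Complex.normSq z := mul_nonneg hmupos.le hNpos
        linarith only [he, hnn]
      linarith only [hsplit, hmuge, hle]
    by_cases h3 : 1/η3 < ‖z‖
    · have habs : 0 < ‖z‖ := by linarith
      have hv0 : z⁻¹ ≠ 0 := inv_ne_zero hz0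
      have habsv : ‖z⁻¹ - 0‖ < η3 := by
        rw [sub_zero, norm_inv]
        rw [inv_lt_comm₀ habs hη3] at *
        rwa [← one_div]
      have hlog := hc3 z⁻¹ hv0 habsv
      rw [one_div, inv_inv] at hlog
      have hq : mu z / ‖z⁻¹‖ ^ 2 = mu z * ‖z‖ ^ 2 := by
        rw [norm_inv, inv_pow]
        rw [div_eq_mul_inv, inv_inv]
      rw [hq] at hlog
      have hqpos : 0 < mu z * ‖z‖ ^ 2 := by positivity
      have hge : Real.exp (-D3) ≤ mu z * ‖z‖ ^ 2 := by
        calc Real.exp (-D3) ≤ Real.exp (Real.log (mu z * ‖z‖ ^ 2)) :=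
            Real.exp_le_exp.2 hlog
          _ = mu z * ‖z‖ ^ 2 := Real.exp_log hqpos
      have hNeq : Complex.normSq z = ‖z‖ ^ 2 := Complex.normSq_eq_norm_sq z
      have hle : c0 ≤ Real.exp (-D3) := le_trans (min_le_right _ _) (min_le_left _ _)
      have hsplit : mu z * (Complex.normSq z + 1) = mu z * ‖z‖ ^ 2 + mu z := by
        rw [hNeq]; ring
      linarith
    · have hzK : z ∈ (Metric.closedBall (0:ℂ) (1/η3) ∩
          ({z : ℂ | η0 ≤ ‖z‖} ∩ {z : ℂ | η1 ≤ ‖z - 1‖})) := by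
        refine ⟨?_, not_lt.1 h0, not_lt.1 h1⟩
        rw [Metric.mem_closedBall, Complex.dist_eq, sub_zero]
        exact not_lt.1 h3
      have := hcK z hzK
      have hle : c0 ≤ cK := le_trans (min_le_right _ _) (min_le_right _ _)
      linarith
  -- main contradiction argument
  intro zz hzz
  by_contra hcon
  push_neg at hcon
  have hσ : 0 < Real.log (lam zz) - Real.log (mu zz) := by
    have := Real.log_lt_log (hmP zz hzz).1 hcon
    linarith
  set σ : ℝ := Real.log (lam zz) - Real.log (mu zz) with hσdef
  set κ : ℝ := Real.exp σ - 1 with hκdef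
  have hκpos : 0 < κ := by
    have := Real.add_one_le_exp σ
    rw [hκdef]
    linarith
  have hbzz := barr_le' zz
  have hBpos : 0 < Real.log 2 - barr zz + 1 := by linarith
  set δ : ℝ := min (c0^2*κ/24) (σ/(2*(Real.log 2 - barr zz + 1))) with hδdef
  have hδpos : 0 < δ := lt_min (by positivity) (by positivity)
  have hδle : δ ≤ c0^2*κ/24 := min_le_left _ _
  have hδ2 : δ ≤ σ/(2*(Real.log 2 - barr zz + 1)) := min_le_right _ _
  set W : ℂ → ℝ := fun z => (Real.log (lam z) - Real.log (mu z)) + δ * barr z with hWdef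
  have hWzz : W zz = σ + δ * barr zz := rfl
  have hWapp : ∀ y : ℂ, W y = (Real.log (lam y) - Real.log (mu y)) + δ * barr y :=
    fun _ => rfl
  clear_value σ κ δ W
  -- exclusion radius around 0
  set ρ0 : ℝ := min (min ε0 (1/2)) (Real.exp ((W zz - M - 3*δ)/(2*δ) - 1)) with hρ0def
  have hρ0pos : 0 < ρ0 := lt_min (lt_min hε0 (by norm_num)) (Real.exp_pos _)
  have hρ0half : ρ0 ≤ 1/2 := le_trans (min_le_left _ _) (min_le_right _ _)
  have hexp0 : Real.log ρ0 ≤ (W zz - M - 3*δ)/(2*δ) - 1 := by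
    calc Real.log ρ0 ≤ Real.log (Real.exp ((W zz - M - 3*δ)/(2*δ) - 1)) :=
        Real.log_le_log hρ0pos (min_le_right _ _)
      _ = _ := Real.log_exp _
  clear_value ρ0
  have hex0 : ∀ z ∈ (({0,1} : Set ℂ)ᶜ), ‖z‖ < ρ0 → W z < W zz := by
    intro z hz hlt
    obtain ⟨hz0, hz1⟩ := (hmem z).1 hz
    have habs : 0 < ‖z‖ := norm_pos_iff.2 hz0
    have hble := barr_near0 (le_trans hlt.le hρ0half)
    have hlogN : Real.log (Complex.normSq z) = 2 * Real.log (‖z‖) := by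
      rw [Complex.normSq_eq_norm_sq, Real.log_pow]
      norm_num
    have hlogz : Real.log (‖z‖) ≤ Real.log ρ0 := Real.log_le_log habs hlt.le
    have huM := hM z hz
    have hmul : δ * barr z ≤ δ * (2*Real.log ρ0 + 3) := by
      apply mul_le_mul_of_nonneg_left _ hδpos.le
      rw [hlogN] at hble
      linarith
    have hstep : 2*δ*Real.log ρ0 ≤ 2*δ*((W zz - M - 3*δ)/(2*δ) - 1) :=
      mul_le_mul_of_nonneg_left hexp0 (by positivity)
    have hstep2 : 2*δ*((W zz - M - 3*δ)/(2*δ) - 1) = W zz - M - 3*δ - 2*δ := by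
      field_simp
    rw [hWapp z]
    linarith only [huM, hmul, hstep, hstep2, hδpos]
  -- exclusion radius around 1
  set ρ1 : ℝ := min (min ε1 (1/2)) (Real.exp ((W zz - M - 3*δ)/(2*δ) - 1)) with hρ1def
  have hρ1pos : 0 < ρ1 := lt_min (lt_min hε1 (by norm_num)) (Real.exp_pos _)
  have hρ1half : ρ1 ≤ 1/2 := le_trans (min_le_left _ _) (min_le_right _ _)
  have hexp1 : Real.log ρ1 ≤ (W zz - M - 3*δ)/(2*δ) - 1 := by
    calc Real.log ρ1 ≤ Real.log (Real.exp ((W zz - M - 3*δ)/(2*δ) - 1)) :=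
        Real.log_le_log hρ1pos (min_le_right _ _)
      _ = _ := Real.log_exp _
  clear_value ρ1
  have hex1 : ∀ z ∈ (({0,1} : Set ℂ)ᶜ), ‖z - 1‖ < ρ1 → W z < W zz := by
    intro z hz hlt
    obtain ⟨hz0, hz1⟩ := (hmem z).1 hz
    have habs : 0 < ‖z - 1‖ := norm_pos_iff.2 (sub_ne_zero.2 hz1)
    have hble := barr_near1 (le_trans hlt.le hρ1half)
    have hlogN : Real.log (Complex.normSq (z - 1)) = 2 * Real.log (‖z - 1‖) := by
      rw [Complex.normSq_eq_norm_sq, Real.log_pow]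
      norm_num
    have hlogz : Real.log (‖z - 1‖) ≤ Real.log ρ1 := Real.log_le_log habs hlt.le
    have huM := hM z hz
    have hmul : δ * barr z ≤ δ * (2*Real.log ρ1 + 3) := by
      apply mul_le_mul_of_nonneg_left _ hδpos.le
      rw [hlogN] at hble
      linarith
    have hstep : 2*δ*Real.log ρ1 ≤ 2*δ*((W zz - M - 3*δ)/(2*δ) - 1) :=
      mul_le_mul_of_nonneg_left hexp1 (by positivity)
    have hstep2 : 2*δ*((W zz - M - 3*δ)/(2*δ) - 1) = W zz - M - 3*δ - 2*δ := by
      field_simp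
    rw [hWapp z]
    linarith only [huM, hmul, hstep, hstep2, hδpos]
  -- exclusion radius at infinity
  set R : ℝ := max 2 (Real.exp ((M + δ*Real.log 2 - W zz)/(2*δ) + 1)) with hRdef
  have hRpos : (0:ℝ) < R := lt_of_lt_of_le two_pos (le_max_left _ _)
  have hexpR : (M + δ*Real.log 2 - W zz)/(2*δ) + 1 ≤ Real.log R := by
    calc (M + δ*Real.log 2 - W zz)/(2*δ) + 1
        = Real.log (Real.exp ((M + δ*Real.log 2 - W zz)/(2*δ) + 1)) := (Real.log_exp _).symm
      _ ≤ Real.log R := Real.log_le_log (Real.exp_pos _) (le_max_right _ _)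
  clear_value R
  have hexR : ∀ z ∈ (({0,1} : Set ℂ)ᶜ), R < ‖z‖ → W z < W zz := by
    intro z hz hlt
    obtain ⟨hz0, hz1⟩ := (hmem z).1 hz
    have habs : 0 < ‖z‖ := norm_pos_iff.2 hz0
    have hNpos : 0 < Complex.normSq z := Complex.normSq_pos.2 hz0
    have hble := barr_le z
    have hlog1 : Real.log (Complex.normSq z) ≤ Real.log (Complex.normSq z + 1) :=
      Real.log_le_log hNpos (by linarith)
    have hlogN : Real.log (Complex.normSq z) = 2 * Real.log (‖z‖) := by
      rw [Complex.normSq_eq_norm_sq, Real.log_pow]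
      norm_num
    have hlogz : Real.log R ≤ Real.log (‖z‖) := Real.log_le_log hRpos hlt.le
    have hb2 : barr z ≤ Real.log 2 - 2*Real.log R := by
      rw [hlogN] at hlog1
      linarith
    have hmul : δ * barr z ≤ δ * (Real.log 2 - 2*Real.log R) :=
      mul_le_mul_of_nonneg_left hb2 hδpos.le
    have hstep : 2*δ*((M + δ*Real.log 2 - W zz)/(2*δ) + 1) ≤ 2*δ*Real.log R :=
      mul_le_mul_of_nonneg_left hexpR (by positivity)
    have hstep2 : 2*δ*((M + δ*Real.log 2 - W zz)/(2*δ) + 1)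
        = M + δ*Real.log 2 - W zz + 2*δ := by
      field_simp
    have huM := hM z hz
    rw [hWapp z]
    linarith only [huM, hmul, hstep, hstep2, hδpos]
  -- the compact set where the maximum is attained
  have hK'c : IsCompact (Metric.closedBall (0:ℂ) R ∩
      ({z : ℂ | ρ0 ≤ ‖z‖} ∩ {z : ℂ | ρ1 ≤ ‖z - 1‖})) :=
    (isCompact_closedBall _ _).inter_right
      ((isClosed_le continuous_const continuous_norm).inter
        (isClosed_le continuous_const (continuous_norm.comp
          (continuous_id.sub continuous_const))))
  have hK'Ω : (Metric.closedBall (0:ℂ) R ∩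
      ({z : ℂ | ρ0 ≤ ‖z‖} ∩ {z : ℂ | ρ1 ≤ ‖z - 1‖}))
      ⊆ (({0,1} : Set ℂ)ᶜ) := by
    intro z hz
    rw [hmem]
    obtain ⟨-, hz0, hz1⟩ := hz
    rw [Set.mem_setOf_eq] at hz0 hz1
    constructor
    · intro h
      rw [h] at hz0
      simp at hz0
      linarith
    · intro h
      rw [h] at hz1
      simp at hz1
      linarith
  have hzzK : zz ∈ (Metric.closedBall (0:ℂ) R ∩
      ({z : ℂ | ρ0 ≤ ‖z‖} ∩ {z : ℂ | ρ1 ≤ ‖z - 1‖})) := by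
    refine ⟨?_, ?_, ?_⟩
    · rw [Metric.mem_closedBall, Complex.dist_eq, sub_zero]
      by_contra h
      push_neg at h
      exact lt_irrefl _ (hexR zz hzz h)
    · rw [Set.mem_setOf_eq]
      by_contra h
      push_neg at h
      exact lt_irrefl _ (hex0 zz hzz h)
    · rw [Set.mem_setOf_eq]
      by_contra h
      push_neg at h
      exact lt_irrefl _ (hex1 zz hzz h)
  have hWcont : ContinuousOn W (Metric.closedBall (0:ℂ) R ∩
      ({z : ℂ | ρ0 ≤ ‖z‖} ∩ {z : ℂ | ρ1 ≤ ‖z - 1‖})) := by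
    intro z hz
    have hzΩ := hK'Ω hz
    obtain ⟨hz0, hz1⟩ := (hmem z).1 hzΩ
    have : ContinuousAt W z := by
      rw [hWdef]
      exact ((huCD z hzΩ).continuousAt).add
        (continuousAt_const.mul (barr_contDiffAt hz0 hz1).continuousAt)
    exact this.continuousWithinAt
  obtain ⟨zm, hzmK, hzmMax⟩ := hK'c.exists_isMaxOn ⟨zz, hzzK⟩ hWcont
  have hzmΩ := hK'Ω hzmK
  obtain ⟨hzm0, hzm1⟩ := (hmem zm).1 hzmΩ
  have hglob : ∀ z ∈ (({0,1} : Set ℂ)ᶜ), W z ≤ W zm := by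
    intro z hz
    by_cases h0 : ‖z‖ < ρ0
    · exact le_of_lt (lt_of_lt_of_le (hex0 z hz h0) (hzmMax hzzK))
    by_cases h1 : ‖z - 1‖ < ρ1
    · exact le_of_lt (lt_of_lt_of_le (hex1 z hz h1) (hzmMax hzzK))
    by_cases hR' : R < ‖z‖
    · exact le_of_lt (lt_of_lt_of_le (hexR z hz hR') (hzmMax hzzK))
    · refine hzmMax ⟨?_, not_lt.1 h0, not_lt.1 h1⟩
      rw [Metric.mem_closedBall, Complex.dist_eq, sub_zero]
      exact not_lt.1 hR'
  have hlocmax : IsLocalMax W zm := by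
    filter_upwards [hopen.mem_nhds hzmΩ] with x hx using hglob x hx
  have hWCD : ContDiffAt ℝ 2 W zm := by
    rw [hWdef]
    exact (huCD zm hzmΩ).add (contDiffAt_const.mul (barr_contDiffAt hzm0 hzm1))
  have hlap_le := laplacian_nonpos_of_isLocalMax hWCD hlocmax
  -- compute laplacian of W at zm
  have e1 : laplacian W zm = laplacian (fun z => Real.log (lam z) - Real.log (mu z)) zm
      + laplacian (fun z => δ * barr z) zm := by
    rw [hWdef]
    exact laplacian_add (huCD zm hzmΩ) (contDiffAt_const.mul (barr_contDiffAt hzm0 hzm1))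
  have e2 : laplacian (fun z => δ * barr z) zm = δ * laplacian barr zm :=
    laplacian_const_mul δ (barr_contDiffAt hzm0 hzm1)
  have e3 : laplacian (fun z => Real.log (lam z) - Real.log (mu z)) zm
      = laplacian (fun z => Real.log (lam z)) zm - laplacian (fun z => Real.log (mu z)) zm :=
    laplacian_sub (hlamCD zm hzmΩ) (hmuCD zm hzmΩ)
  have hlapW : laplacian W zm = (lam zm^2 - mu zm^2)
      + δ * (-12/(Complex.normSq zm + 1)^2) := by
    rw [e1, e2, e3, (hlP zm hzmΩ).2, (hmP zm hzmΩ).2, barr_lap hzm0 hzm1]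
  -- lower bound on u at zm
  have hWm_ge : W zz ≤ W zm := hzmMax hzzK
  have hbarr_zm : barr zm ≤ Real.log 2 := barr_le' zm
  have hδ2' : δ * (2*(Real.log 2 - barr zz + 1)) ≤ σ := by
    rw [← le_div_iff₀ (by positivity)]
    exact hδ2
  have h3 : W zm = (Real.log (lam zm) - Real.log (mu zm)) + δ * barr zm := hWapp zm
  have h5 : δ * barr zm ≤ δ * Real.log 2 := mul_le_mul_of_nonneg_left hbarr_zm hδpos.le
  have h6 : δ * barr zz ≥ δ * barr zz := le_refl _
  have hum : σ/2 ≤ Real.log (lam zm) - Real.log (mu zm) := by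
    linarith only [hWm_ge, hWzz, h3, h5, hδ2', hδpos]
  -- final contradiction
  have hmulow := hmulb zm hzmΩ
  have hmupos := (hmP zm hzmΩ).1
  have hlampos := (hlP zm hzmΩ).1
  set P : ℝ := Complex.normSq zm + 1 with hPdef
  have hP1 : 1 ≤ P := by
    rw [hPdef]
    have := Complex.normSq_nonneg zm
    linarith
  have hPpos : 0 < P := by linarith
  clear_value P
  have hlam_eq : lam zm = mu zm * Real.exp (Real.log (lam zm) - Real.log (mu zm)) := by
    rw [Real.exp_sub, Real.exp_log hlampos, Real.exp_log hmupos]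
    field_simp
  set L : ℝ := Real.log (lam zm) - Real.log (mu zm) with hLdef
  clear_value L
  have hexpge : Real.exp σ ≤ Real.exp L ^ 2 := by
    have e : Real.exp L ^ 2 = Real.exp (L + L) := by
      rw [sq, ← Real.exp_add]
    rw [e]
    exact Real.exp_le_exp.2 (by linarith)
  have hlamsq : lam zm^2 - mu zm^2 = mu zm^2 * (Real.exp L^2 - 1) := by
    rw [hlam_eq]
    ring
  have hmuP : c0 / P ≤ mu zm := (div_le_iff₀ hPpos).2 hmulow
  have hmusq : (c0/P)^2 ≤ mu zm^2 := pow_le_pow_left₀ (by positivity) hmuP 2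
  have hge : c0^2/P^2 * κ ≤ lam zm^2 - mu zm^2 := by
    rw [hlamsq]
    have h1 : κ ≤ Real.exp L^2 - 1 := by
      rw [hκdef]
      linarith
    have h2 : c0^2/P^2 = (c0/P)^2 := by rw [div_pow]
    rw [h2]
    calc (c0/P)^2 * κ ≤ mu zm^2 * κ := mul_le_mul_of_nonneg_right hmusq hκpos.le
      _ ≤ mu zm^2 * (Real.exp L^2 - 1) :=
        mul_le_mul_of_nonneg_left h1 (sq_nonneg _)
  rw [hlapW] at hlap_le
  have he : δ*(-12/P^2) = -(δ*(12/P^2)) := by ring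
  have hlap_le' : lam zm^2 - mu zm^2 ≤ δ*(12/P^2) := by
    rw [he] at hlap_le
    linarith
  have hdb : δ * (12/P^2) ≤ c0^2*κ/(2*P^2) := by
    have h12 : (0:ℝ) ≤ 12/P^2 := by positivity
    calc δ * (12/P^2) ≤ (c0^2*κ/24) * (12/P^2) := mul_le_mul_of_nonneg_right hδle h12
      _ = c0^2*κ/(2*P^2) := by
        field_simp
        ring
  have hcontra : c0^2*κ/(2*P^2) < c0^2/P^2 * κ := by
    have h1 : c0^2*κ/(2*P^2) < c0^2*κ/P^2 := by
      apply div_lt_div_of_pos_left (by positivity) (by positivity)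
      have hP2 : 0 < P^2 := by positivity
      linarith only [hP2]
    have h2 : c0^2*κ/P^2 = c0^2/P^2*κ := by ring
    linarith only [h1, h2]
  linarith only [hcontra, hdb, hge, hlap_le']

/-- Uniqueness of the generalized hyperbolic density. -/
theorem genHyp_unique
    (a1 a2 a3 : ℝ) (ha1 : 0 < a1) (ha1' : a1 ≤ 1) (ha2 : 0 < a2) (ha2' : a2 ≤ 1)
    (ha3 : 0 < a3) (ha3' : a3 ≤ 1) (hsum : 2 < a1 + a2 + a3)
    (lam mu : ℂ → ℝ)
    (hlam : IsGenHypDensity a1 a2 a3 lam) (hmu : IsGenHypDensity a1 a2 a3 mu) :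
    ∀ z ∈ (({0, 1} : Set ℂ)ᶜ), lam z = mu z := by
  intro z hz
  exact le_antisymm (genHyp_le a1 a2 a3 ha1 ha2 ha3 lam mu hlam hmu z hz)
    (genHyp_le a1 a2 a3 ha1 ha2 ha3 mu lam hmu hlam z hz)
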